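/- Suppose the finite group G acts on the finite set Ω and (G, Ω) satisfies Hypothesis (3fix), and let ω ∈ Ω. Then one of the following holds: (1) |G_ω| is even; (2) |G_ω| is odd and there exist three distinct points of Ω, one of which is ω, whose pointwise stabilizer H in G is nontrivial and is a Frobenius complement in G_ω, i.e. H is a proper subgroup of G_ω with H ∩ xHx⁻¹ = 1 for all x ∈ G_ω \ H; (3) |G_ω| is odd and G_ω has exactly three common fixed points on Ω. -/

import Mathlib

/-- Hypothesis (3fix): the action of `G` on `Ω` is faithful and transitive, every element
of `G` fixing at least four distinct points of `Ω` is the identity, and some nontrivial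
element of `G` fixes at least three distinct points of `Ω`. -/
def Hyp3fix (G : Type*) [Group G] (Ω : Type*) [MulAction G Ω] : Prop :=
  MulAction.IsPretransitive G Ω ∧
  (∀ g : G, (∀ ω : Ω, g • ω = ω) → g = 1) ∧
  (∀ g : G, ∀ a b c d : Ω, a ≠ b → a ≠ c → a ≠ d → b ≠ c → b ≠ d → c ≠ d →
      g • a = a → g • b = b → g • c = c → g • d = d → g = 1) ∧
  (∃ g : G, g ≠ 1 ∧ ∃ a b c : Ω, a ≠ b ∧ a ≠ c ∧ b ≠ c ∧
      g • a = a ∧ g • b = b ∧ g • c = c)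

/-- Suppose `(G, Ω)` satisfies Hypothesis (3fix) and `ω ∈ Ω`. Then either `|G_ω|` is
even; or `|G_ω|` is odd and the pointwise stabilizer `H` of some three distinct points
(one of which is `ω`) is nontrivial and is a Frobenius complement in `G_ω`; or
`|G_ω|` is odd and `G_ω` has exactly three common fixed points on `Ω`. -/
theorem hyp3fix_cases (G : Type*) [Group G] [Finite G]
    (Ω : Type*) [Finite Ω] [MulAction G Ω] (h : Hyp3fix G Ω) (ω : Ω) :
    Even (Nat.card (MulAction.stabilizer G ω)) ∨
    (Odd (Nat.card (MulAction.stabilizer G ω)) ∧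
      ∃ b c : Ω, ω ≠ b ∧ ω ≠ c ∧ b ≠ c ∧
        ∃ H : Subgroup G,
          H = MulAction.stabilizer G ω ⊓ MulAction.stabilizer G b ⊓
                MulAction.stabilizer G c ∧
          H ≠ ⊥ ∧ H < MulAction.stabilizer G ω ∧
          ∀ x ∈ MulAction.stabilizer G ω, x ∉ H →
            H ⊓ H.map (MulAut.conj x).toMonoidHom = ⊥) ∨
    (Odd (Nat.card (MulAction.stabilizer G ω)) ∧
      Nat.card {p : Ω | ∀ x ∈ MulAction.stabilizer G ω, x • p = p} = 3) := by
  classical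
  obtain ⟨htrans, hfaith, h4, g0, hg0, a, b0, c0, hab0, hac0, hbc0, hga, hgb, hgc⟩ := h
  obtain ⟨t, ht⟩ := htrans.exists_smul_eq a ω
  set g : G := t * g0 * t⁻¹ with hgdef
  set b : Ω := t • b0 with hbdef
  set c : Ω := t • c0 with hcdef
  have hgω : g • ω = ω := by
    rw [← ht, hgdef, mul_smul, mul_smul, inv_smul_smul, hga]
  have hgb' : g • b = b := by
    rw [hbdef, hgdef, mul_smul, mul_smul, inv_smul_smul, hgb]
  have hgc' : g • c = c := by
    rw [hcdef, hgdef, mul_smul, mul_smul, inv_smul_smul, hgc]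
  have hgne : g ≠ 1 := by
    intro hc
    apply hg0
    have : g0 = t⁻¹ * g * t := by rw [hgdef]; group
    rw [this, hc, mul_one, inv_mul_cancel]
  have hωb : ω ≠ b := by rw [← ht, hbdef]; exact (MulAction.injective t).ne hab0
  have hωc : ω ≠ c := by rw [← ht, hcdef]; exact (MulAction.injective t).ne hac0
  have hbc : b ≠ c := (MulAction.injective t).ne hbc0
  set K := MulAction.stabilizer G ω with hKdef
  set H : Subgroup G := K ⊓ MulAction.stabilizer G b ⊓ MulAction.stabilizer G c with hHdef
  have memH : ∀ z : G, z ∈ H ↔ (z • ω = ω ∧ z • b = b ∧ z • c = c) := by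
    intro z
    simp [hHdef, hKdef, Subgroup.mem_inf, MulAction.mem_stabilizer_iff, and_assoc]
  have hgH : g ∈ H := (memH g).mpr ⟨hgω, hgb', hgc'⟩
  have hHne : H ≠ ⊥ := by
    intro hc
    exact hgne (by simpa [hc, Subgroup.mem_bot] using hgH)
  have hHK : H ≤ K := le_trans inf_le_left inf_le_left
  -- key: a nontrivial element of H fixes only ω, b, c
  have hfix : ∀ z ∈ H, z ≠ 1 → ∀ p : Ω, z • p = p → p = ω ∨ p = b ∨ p = c := by
    intro z hz hzne p hzp
    by_contra hcon
    push_neg at hcon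
    obtain ⟨hpω, hpb, hpc⟩ := hcon
    obtain ⟨h1, h2, h3⟩ := (memH z).mp hz
    exact hzne (h4 z ω b c p hωb hωc (Ne.symm hpω) hbc (Ne.symm hpb) (Ne.symm hpc)
      h1 h2 h3 hzp)
  rcases Nat.even_or_odd (Nat.card K) with heven | hodd
  · exact Or.inl heven
  by_cases hHKeq : H = K
  · -- case 3
    refine Or.inr (Or.inr ⟨hodd, ?_⟩)
    have hset : {p : Ω | ∀ x ∈ K, x • p = p} = ({ω, b, c} : Set Ω) := by
      ext p
      constructor
      · intro hp
        have := hfix g hgH hgne p (hp g (hHKeq ▸ hgH))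
        simpa [Set.mem_insert_iff] using this
      · intro hp x hx
        obtain ⟨h1, h2, h3⟩ := (memH x).mp (hHKeq ▸ hx : x ∈ H)
        rcases hp with h | h | h <;> subst h <;> assumption
    rw [hset, Nat.card_coe_set_eq,
      Set.ncard_insert_of_notMem (by simp [hωb, hωc]), Set.ncard_pair hbc]
  · -- case 2
    refine Or.inr (Or.inl ⟨hodd, b, c, hωb, hωc, hbc, H, rfl, hHne, lt_of_le_of_ne hHK hHKeq, ?_⟩)
    intro x hxK hxH
    rw [eq_bot_iff]
    intro y hy
    simp only [Subgroup.mem_inf] at hy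
    obtain ⟨hyH, hyC⟩ := hy
    rw [Subgroup.mem_bot]
    by_contra hyne
    obtain ⟨h', hh'H, hh'⟩ := Subgroup.mem_map.mp hyC
    have hh'eq : y = x * h' * x⁻¹ := by
      rw [← hh']; rfl
    obtain ⟨hh1, hh2, hh3⟩ := (memH h').mp hh'H
    have hxω : x • ω = ω := hxK
    have hyxb : y • (x • b) = x • b := by
      rw [hh'eq, mul_smul, mul_smul, inv_smul_smul, hh2]
    have hyxc : y • (x • c) = x • c := by
      rw [hh'eq, mul_smul, mul_smul, inv_smul_smul, hh3]
    have hxbne : x • b ≠ ω := by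
      intro hc
      exact hωb (MulAction.injective x (show x • b = x • ω by rw [hc, hxω])).symm
    have hxcne : x • c ≠ ω := by
      intro hc
      exact hωc (MulAction.injective x (show x • c = x • ω by rw [hc, hxω])).symm
    have hxbc : x • b ≠ x • c := (MulAction.injective x).ne hbc
    have hb' := hfix y hyH hyne (x • b) hyxb
    have hc' := hfix y hyH hyne (x • c) hyxc
    -- resolve cases
    have hswap : x • b = c ∧ x • c = b := by
      rcases hb' with h | h | h
      · exact absurd h hxbne
      · rcases hc' with h2 | h2 | h2
        · exact absurd h2 hxcne
        · exact absurd (h.trans h2.symm) hxbc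
        · exact absurd ((memH x).mpr ⟨hxω, h, h2⟩) hxH
      · rcases hc' with h2 | h2 | h2
        · exact absurd h2 hxcne
        · exact ⟨h, h2⟩
        · exact absurd (h.trans h2.symm) hxbc
    have hx2H : x ^ 2 ∈ H := by
      refine (memH _).mpr ⟨?_, ?_, ?_⟩
      · rw [pow_two, mul_smul, hxω, hxω]
      · rw [pow_two, mul_smul, hswap.1, hswap.2]
      · rw [pow_two, mul_smul, hswap.2, hswap.1]
    -- odd order argument
    set xK : K := ⟨x, hxK⟩ with hxKdef
    have hdvd : orderOf xK ∣ Nat.card K := orderOf_dvd_natCard xK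
    have hoddn : Odd (orderOf xK) := by
      rcases Nat.even_or_odd (orderOf xK) with he | ho
      · exfalso
        obtain ⟨k, hk⟩ := he
        obtain ⟨j, hj⟩ := dvd_trans (⟨k, by omega⟩ : 2 ∣ orderOf xK) hdvd
        exact (Nat.not_even_iff_odd.mpr hodd) ⟨j, by omega⟩
      · exact ho
    have hxn : x ^ orderOf xK = 1 := by
      have := pow_orderOf_eq_one xK
      have := congrArg (Subtype.val) this
      simpa only [SubgroupClass.coe_pow, OneMemClass.coe_one] using this
    obtain ⟨m, hm⟩ := hoddn
    have hxpow : x = (x ^ 2) ^ (m + 1) := by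
      rw [← pow_mul]
      have h2m : 2 * (m + 1) = orderOf xK + 1 := by omega
      rw [h2m, pow_succ, hxn, one_mul]
    exact hxH (hxpow ▸ pow_mem hx2H (m + 1))
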